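/- Let n ≥ 5 with n−1 even, let x ∈ [0,1]^n, and let T* ⊆ {1,…,n−1} satisfy properties (P1)–(P4). Then the following two statements are equivalent: (i) there exist Lebesgue-measurable sets X_1, …, X_n ⊆ [0,1) with μ(X_i) = x_i for all i and ∑_{i=1}^{n−1} ( μ(X_i ∩ X_{i+1}) + μ(X_i ∩ X_n) ) = φ(T*) (index i+1 modulo n−1); (ii) there exists a vector z = (z_1,…,z_{n−1}) ∈ ℝ^{n−1} satisfying: z_i ≥ m_i for i ∈ T* ∪ (T*+1); z_i ≥ M_i for i ∈ {1,…,n−1} ∖ (T* ∪ (T*+1)); z_i ≤ M_i for all i ∈ {1,…,n−1}; z_i + z_{i+1} ≥ M'_i for i ∈ T*; and m'_i ≤ z_i + z_{i+1} ≤ M'_i for i ∈ {1,…,n−1} ∖ T* (index i+1 modulo n−1). -/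

import Mathlib

open Finset

/-- Cyclic successor on the rim `{1, …, n-1}` of the wheel `W_{n-1}`. -/
def wsucc (n i : ℕ) : ℕ := if i = n - 1 then 1 else i + 1

/-- The dual bound `φ(T)`. -/
noncomputable def phiW (n : ℕ) (x : ℕ → ℝ) (T : Finset ℕ) : ℝ :=
  ∑ i ∈ Finset.Icc 1 (n - 1) \ T, max 0 (x i + x (wsucc n i) - 1) +
  ∑ i ∈ Finset.Icc 1 (n - 1) \ (T ∪ T.image (wsucc n)), max 0 (x i + x n - 1) +
  ∑ i ∈ T, max 0 (x i + x (wsucc n i) + x n - 1)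

/-- `Φ* = max{φ(T) : T ⊆ {1,…,n-1}, T ∩ (T+1) = ∅}`. -/
noncomputable def phiStarW (n : ℕ) (x : ℕ → ℝ) : ℝ :=
  ((Finset.Icc 1 (n - 1)).powerset.filter
      (fun T => T ∩ T.image (wsucc n) = ∅)).sup'
    ⟨∅, by simp⟩ (phiW n x)

/-- Cyclic predecessor on the rim `{1, …, n-1}` of the wheel `W_{n-1}`. -/
def wpred (n i : ℕ) : ℕ := if i = 1 then n - 1 else i - 1

noncomputable def mW (n : ℕ) (x : ℕ → ℝ) (i : ℕ) : ℝ := max 0 (x i - x n)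

noncomputable def MW (n : ℕ) (x : ℕ → ℝ) (i : ℕ) : ℝ := min (x i) (1 - x n)

noncomputable def m'W (n : ℕ) (x : ℕ → ℝ) (i : ℕ) : ℝ := min 1 (x i + x (wsucc n i)) - x n

noncomputable def M'W (n : ℕ) (x : ℕ → ℝ) (i : ℕ) : ℝ := max 1 (x i + x (wsucc n i)) - x n

/-- The system of linear inequalities (1)–(6) for the vector `z`. -/
def zSystem (n : ℕ) (x : ℕ → ℝ) (T : Finset ℕ) (z : ℕ → ℝ) : Prop :=
  (∀ i ∈ T ∪ T.image (wsucc n), mW n x i ≤ z i) ∧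
  (∀ i ∈ Finset.Icc 1 (n - 1) \ (T ∪ T.image (wsucc n)), MW n x i ≤ z i) ∧
  (∀ i ∈ Finset.Icc 1 (n - 1), z i ≤ MW n x i) ∧
  (∀ i ∈ T, M'W n x i ≤ z i + z (wsucc n i)) ∧
  (∀ i ∈ Finset.Icc 1 (n - 1) \ T,
      m'W n x i ≤ z i + z (wsucc n i) ∧ z i + z (wsucc n i) ≤ M'W n x i)

section Help
open MeasureTheory Set

lemma vol_ne_top {A : Set ℝ} (hA : A ⊆ Set.Ico (0:ℝ) 1) : volume A ≠ ⊤ := by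
  have h1 : volume A ≤ volume (Set.Ico (0:ℝ) 1) := measure_mono hA
  have h2 : volume (Set.Ico (0:ℝ) 1) = 1 := by simp [Real.volume_Ico]
  rw [h2] at h1
  exact ne_top_of_le_ne_top ENNReal.one_ne_top h1

lemma nu_mono {A B : Set ℝ} (hB : B ⊆ Set.Ico (0:ℝ) 1) (h : A ⊆ B) :
    (volume A).toReal ≤ (volume B).toReal :=
  ENNReal.toReal_mono (vol_ne_top hB) (measure_mono h)

lemma nu_Ico (a b : ℝ) : (volume (Set.Ico a b)).toReal = max 0 (b - a) := by
  rw [Real.volume_Ico, ENNReal.toReal_ofReal', max_comm]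

lemma nu_le_one {A : Set ℝ} (hA : A ⊆ Set.Ico (0:ℝ) 1) : (volume A).toReal ≤ 1 := by
  have := nu_mono (Set.Subset.refl _) hA
  rw [nu_Ico] at this
  simpa using this

lemma nu_union_add_inter {A B : Set ℝ} (hA : A ⊆ Set.Ico (0:ℝ) 1) (hB : B ⊆ Set.Ico (0:ℝ) 1)
    (mB : MeasurableSet B) :
    (volume (A ∪ B)).toReal + (volume (A ∩ B)).toReal
      = (volume A).toReal + (volume B).toReal := by
  have h := measure_union_add_inter (μ := volume) A mB
  have h2 := congrArg ENNReal.toReal h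
  rwa [ENNReal.toReal_add (vol_ne_top (Set.union_subset hA hB))
        (vol_ne_top (fun y hy => hA hy.1)),
      ENNReal.toReal_add (vol_ne_top hA) (vol_ne_top hB)] at h2

lemma nu_inter_add_diff {A C : Set ℝ} (hA : A ⊆ Set.Ico (0:ℝ) 1) (mC : MeasurableSet C) :
    (volume (A ∩ C)).toReal + (volume (A \ C)).toReal = (volume A).toReal := by
  have h := measure_inter_add_diff (μ := volume) A mC
  have h2 := congrArg ENNReal.toReal h
  rwa [ENNReal.toReal_add (vol_ne_top (fun y hy => hA hy.1))
        (vol_ne_top (fun y hy => hA hy.1))] at h2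

lemma nu_union_le {A B : Set ℝ} (hA : A ⊆ Set.Ico (0:ℝ) 1) (hB : B ⊆ Set.Ico (0:ℝ) 1) :
    (volume (A ∪ B)).toReal ≤ (volume A).toReal + (volume B).toReal := by
  have h : (volume (A ∪ B)).toReal ≤ (volume A + volume B).toReal :=
    ENNReal.toReal_mono (ENNReal.add_ne_top.mpr ⟨vol_ne_top hA, vol_ne_top hB⟩)
      (measure_union_le A B)
  rwa [ENNReal.toReal_add (vol_ne_top hA) (vol_ne_top hB)] at h

lemma nu_pair {A B : Set ℝ} (hA : A ⊆ Set.Ico (0:ℝ) 1) (hB : B ⊆ Set.Ico (0:ℝ) 1)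
    (mB : MeasurableSet B) :
    (volume A).toReal + (volume B).toReal - 1 ≤ (volume (A ∩ B)).toReal := by
  have h1 := nu_union_add_inter hA hB mB
  have h2 := nu_le_one (Set.union_subset hA hB)
  linarith

lemma nu_triple {A B C : Set ℝ} (hA : A ⊆ Set.Ico (0:ℝ) 1) (hB : B ⊆ Set.Ico (0:ℝ) 1)
    (hC : C ⊆ Set.Ico (0:ℝ) 1) (mB : MeasurableSet B) (mC : MeasurableSet C) :
    (volume A).toReal + (volume B).toReal + (volume C).toReal - 1
      ≤ (volume (A ∩ B)).toReal + (volume (A ∩ C)).toReal + (volume (B ∩ C)).toReal := by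
  have h1 := nu_union_add_inter hA hB mB
  have h2 := nu_union_add_inter (Set.union_subset hA hB) hC mC
  have h3 : (volume ((A ∪ B) ∩ C)).toReal
      ≤ (volume (A ∩ C)).toReal + (volume (B ∩ C)).toReal := by
    rw [Set.union_inter_distrib_right]
    exact nu_union_le (fun y hy => hA hy.1) (fun y hy => hB hy.1)
  have h4 := nu_le_one (Set.union_subset (Set.union_subset hA hB) hC)
  linarith

lemma nu_diff_le {A C : Set ℝ} (hA : A ⊆ Set.Ico (0:ℝ) 1) (hC : C ⊆ Set.Ico (0:ℝ) 1)
    (mC : MeasurableSet C) : (volume (A \ C)).toReal ≤ 1 - (volume C).toReal := by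
  have h1 := nu_inter_add_diff (Set.Subset.refl (Set.Ico (0:ℝ) 1)) mC
  have h2 : Set.Ico (0:ℝ) 1 ∩ C = C := Set.inter_eq_self_of_subset_right hC
  have h3 : (volume (A \ C)).toReal ≤ (volume (Set.Ico (0:ℝ) 1 \ C)).toReal :=
    nu_mono Set.diff_subset (Set.diff_subset_diff_left hA)
  rw [h2, nu_Ico] at h1
  simp only [sub_zero] at h1
  rw [max_eq_right (by norm_num : (0:ℝ) ≤ 1)] at h1
  linarith

lemma nu_diff_split {A B C : Set ℝ} (hA : A ⊆ Set.Ico (0:ℝ) 1) (hB : B ⊆ Set.Ico (0:ℝ) 1)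
    (mB : MeasurableSet B) (mC : MeasurableSet C) :
    (volume (A \ C)).toReal + (volume (B \ C)).toReal
      = (volume ((A ∪ B) \ C)).toReal + (volume ((A ∩ B) \ C)).toReal := by
  have h := nu_union_add_inter (fun y (hy : y ∈ A \ C) => hA hy.1)
    (fun y (hy : y ∈ B \ C) => hB hy.1) (mB.diff mC)
  have e1 : (A \ C) ∪ (B \ C) = (A ∪ B) \ C := (Set.union_diff_distrib).symm
  have e2 : (A \ C) ∩ (B \ C) = (A ∩ B) \ C := by
    ext y
    simp only [Set.mem_inter_iff, Set.mem_diff]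
    tauto
  rw [e1, e2] at h
  linarith

lemma max_one_eq (c : ℝ) : max 1 c = 1 + max 0 (c - 1) := by
  rcases le_total c 1 with h | h
  · rw [max_eq_left h, max_eq_left (by linarith)]; ring
  · rw [max_eq_right h, max_eq_right (by linarith)]; ring

lemma min_one_eq (c : ℝ) : min 1 c = c - max 0 (c - 1) := by
  rcases le_total c 1 with h | h
  · rw [min_eq_right h, max_eq_left (by linarith)]; ring
  · rw [min_eq_left h, max_eq_right (by linarith)]; ring

end Help

section IdxHelp

lemma wsucc_mem {n : ℕ} (hn : 5 ≤ n) {i : ℕ} (hi : i ∈ Finset.Icc 1 (n-1)) :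
    wsucc n i ∈ Finset.Icc 1 (n-1) := by
  simp only [Finset.mem_Icc] at *
  unfold wsucc
  split_ifs with h <;> omega

lemma wsucc_inj {n : ℕ} (hn : 5 ≤ n) {i j : ℕ} (hi : i ∈ Finset.Icc 1 (n-1))
    (hj : j ∈ Finset.Icc 1 (n-1)) (h : wsucc n i = wsucc n j) : i = j := by
  simp only [Finset.mem_Icc] at hi hj
  unfold wsucc at h
  split_ifs at h <;> omega

lemma wsucc_mod {n : ℕ} (hn : 5 ≤ n) (heven : Even (n-1)) {i : ℕ}
    (hi : i ∈ Finset.Icc 1 (n-1)) : (wsucc n i) % 2 = 1 - i % 2 := by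
  have h2 : (n-1) % 2 = 0 := Nat.even_iff.mp heven
  simp only [Finset.mem_Icc] at hi
  unfold wsucc
  split_ifs with h <;> omega

end IdxHelp
lemma hU_sub {n : ℕ} {T : Finset ℕ} (hn : 5 ≤ n) (hT : T ⊆ Finset.Icc 1 (n-1)) :
    T ∪ T.image (wsucc n) ⊆ Finset.Icc 1 (n-1) := by
  refine Finset.union_subset hT ?_
  intro j hj
  obtain ⟨i, hi, rfl⟩ := Finset.mem_image.mp hj
  exact wsucc_mem hn (hT hi)

lemma sum_split_U {n : ℕ} {T : Finset ℕ} (hn : 5 ≤ n) (hT : T ⊆ Finset.Icc 1 (n-1))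
    (hP1 : T ∩ T.image (wsucc n) = ∅) (F : ℕ → ℝ) :
    ∑ i ∈ Finset.Icc 1 (n-1), F i
      = ∑ i ∈ T, (F i + F (wsucc n i))
        + ∑ i ∈ Finset.Icc 1 (n-1) \ (T ∪ T.image (wsucc n)), F i := by
  have hdisj : Disjoint T (T.image (wsucc n)) := Finset.disjoint_iff_inter_eq_empty.mpr hP1
  have h1 : ∑ i ∈ T ∪ T.image (wsucc n), F i
      = ∑ i ∈ T, F i + ∑ i ∈ T.image (wsucc n), F i := Finset.sum_union hdisj
  have h2 : ∑ i ∈ T.image (wsucc n), F i = ∑ i ∈ T, F (wsucc n i) :=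
    Finset.sum_image (fun i hi j hj h => wsucc_inj hn (hT hi) (hT hj) h)
  have h3 : Finset.Icc 1 (n-1)
      = (T ∪ T.image (wsucc n)) ∪ (Finset.Icc 1 (n-1) \ (T ∪ T.image (wsucc n))) :=
    (Finset.union_sdiff_of_subset (hU_sub hn hT)).symm
  conv_lhs => rw [h3]
  rw [Finset.sum_union Finset.disjoint_sdiff, h1, h2, ← Finset.sum_add_distrib]

lemma sum_ite_T {T s : Finset ℕ} (hT : T ⊆ s) (u v : ℕ → ℝ) :
    ∑ i ∈ s, (if i ∈ T then u i else v i) = ∑ i ∈ T, u i + ∑ i ∈ s \ T, v i := by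
  rw [Finset.sum_ite]
  congr 1
  · apply Finset.sum_congr _ (fun _ _ => rfl)
    rw [Finset.filter_mem_eq_inter, Finset.inter_eq_right.mpr hT]
  · apply Finset.sum_congr _ (fun _ _ => rfl)
    rw [Finset.sdiff_eq_filter]

lemma phiW_regroup {n : ℕ} {T : Finset ℕ} (hn : 5 ≤ n) (x : ℕ → ℝ)
    (hT : T ⊆ Finset.Icc 1 (n-1)) :
    phiW n x T = ∑ i ∈ Finset.Icc 1 (n-1),
      ((if i ∈ T then max 0 (x i + x (wsucc n i) + x n - 1)
          else max 0 (x i + x (wsucc n i) - 1))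
        + (if i ∈ T ∪ T.image (wsucc n) then 0 else max 0 (x i + x n - 1))) := by
  rw [Finset.sum_add_distrib, sum_ite_T hT, sum_ite_T (hU_sub hn hT)]
  rw [Finset.sum_const_zero]
  unfold phiW
  ring

section Forward
open MeasureTheory

lemma forward_z {n : ℕ} (hn : 5 ≤ n) {x : ℕ → ℝ}
    (hx : ∀ i ∈ Finset.Icc 1 n, 0 ≤ x i ∧ x i ≤ 1)
    {T : Finset ℕ} (hT : T ⊆ Finset.Icc 1 (n - 1))
    (hP1 : T ∩ T.image (wsucc n) = ∅)
    (hP3 : ∀ i ∈ T, 1 ≤ x i + x (wsucc n i) + x n ∧ x i + x (wsucc n i) + x n ≤ 2)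
    {X : ℕ → Set ℝ}
    (hXm : ∀ i ∈ Finset.Icc 1 n, MeasurableSet (X i))
    (hXs : ∀ i ∈ Finset.Icc 1 n, X i ⊆ Set.Ico 0 1)
    (hXv : ∀ i ∈ Finset.Icc 1 n, (volume (X i)).toReal = x i)
    (hsum : ∑ i ∈ Finset.Icc 1 (n - 1),
        ((volume (X i ∩ X (wsucc n i))).toReal + (volume (X i ∩ X n)).toReal) = phiW n x T) :
    zSystem n x T (fun i => (volume (X i \ X n)).toReal) := by
  classical
  set U := T ∪ T.image (wsucc n) with hUdef
  have hmemn : ∀ i ∈ Finset.Icc 1 (n-1), i ∈ Finset.Icc 1 n := by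
    intro i hi; simp only [Finset.mem_Icc] at *; omega
  have hnn : n ∈ Finset.Icc 1 n := by simp only [Finset.mem_Icc]; omega
  have hXsub : ∀ i ∈ Finset.Icc 1 (n-1), X i ⊆ Set.Ico (0:ℝ) 1 :=
    fun i hi => hXs i (hmemn i hi)
  have hXme : ∀ i ∈ Finset.Icc 1 (n-1), MeasurableSet (X i) :=
    fun i hi => hXm i (hmemn i hi)
  have hXn : X n ⊆ Set.Ico (0:ℝ) 1 := hXs n hnn
  have hXnm : MeasurableSet (X n) := hXm n hnn
  have hxn := hXv n hnn
  have hz_an : ∀ i ∈ Finset.Icc 1 (n-1),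
      (volume (X i ∩ X n)).toReal + (volume (X i \ X n)).toReal = x i := by
    intro i hi
    rw [← hXv i (hmemn i hi)]
    exact nu_inter_add_diff (hXsub i hi) hXnm
  have han_le : ∀ i ∈ Finset.Icc 1 (n-1), (volume (X i ∩ X n)).toReal ≤ x n := by
    intro i hi
    rw [← hxn]
    exact nu_mono hXn Set.inter_subset_right
  set F : ℕ → ℝ := fun i =>
    (volume (X i ∩ X (wsucc n i))).toReal
      + (if i ∈ T then (volume (X i ∩ X n)).toReal + (volume (X (wsucc n i) ∩ X n)).toReal
          else 0)
      + (if i ∈ U then 0 else (volume (X i ∩ X n)).toReal) with hF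
  set g : ℕ → ℝ := fun i =>
    (if i ∈ T then max 0 (x i + x (wsucc n i) + x n - 1)
        else max 0 (x i + x (wsucc n i) - 1))
      + (if i ∈ U then 0 else max 0 (x i + x n - 1)) with hg
  have hpair : ∀ i ∈ Finset.Icc 1 (n-1),
      max 0 (x i + x (wsucc n i) - 1) ≤ (volume (X i ∩ X (wsucc n i))).toReal := by
    intro i hi
    have hj := wsucc_mem hn hi
    refine max_le ENNReal.toReal_nonneg ?_
    have h := nu_pair (hXsub i hi) (hXsub _ hj) (hXme _ hj)
    rw [hXv i (hmemn i hi), hXv _ (hmemn _ hj)] at h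
    linarith
  have hpn : ∀ i ∈ Finset.Icc 1 (n-1),
      max 0 (x i + x n - 1) ≤ (volume (X i ∩ X n)).toReal := by
    intro i hi
    refine max_le ENNReal.toReal_nonneg ?_
    have h := nu_pair (hXsub i hi) hXn hXnm
    rw [hXv i (hmemn i hi), hxn] at h
    linarith
  have hFg : ∀ i ∈ Finset.Icc 1 (n-1), g i ≤ F i := by
    intro i hi
    have hj := wsucc_mem hn hi
    simp only [hF, hg]
    by_cases h1 : i ∈ T
    · have h2 : i ∈ U := Finset.mem_union_left _ h1
      simp only [h1, h2, if_true]
      have h3 := nu_triple (hXsub i hi) (hXsub _ hj) hXn (hXme _ hj) hXnm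
      rw [hXv i (hmemn i hi), hXv _ (hmemn _ hj), hxn] at h3
      have h4 : (0:ℝ) ≤ (volume (X i ∩ X (wsucc n i))).toReal
          + ((volume (X i ∩ X n)).toReal + (volume (X (wsucc n i) ∩ X n)).toReal) := by
        have := ENNReal.toReal_nonneg (a := volume (X i ∩ X (wsucc n i)))
        have := ENNReal.toReal_nonneg (a := volume (X i ∩ X n))
        have := ENNReal.toReal_nonneg (a := volume (X (wsucc n i) ∩ X n))
        linarith
      have h5 : max 0 (x i + x (wsucc n i) + x n - 1)
          ≤ (volume (X i ∩ X (wsucc n i))).toReal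
            + ((volume (X i ∩ X n)).toReal + (volume (X (wsucc n i) ∩ X n)).toReal) :=
        max_le h4 (by linarith)
      linarith
    · by_cases h2 : i ∈ U
      · simp only [if_neg h1, if_pos h2]
        have := hpair i hi
        linarith
      · simp only [if_neg h1, if_neg h2]
        have := hpair i hi
        have := hpn i hi
        linarith
  have hFsum : ∑ i ∈ Finset.Icc 1 (n-1), F i = phiW n x T := by
    have e1 : ∑ i ∈ Finset.Icc 1 (n-1), F i
        = ∑ i ∈ Finset.Icc 1 (n-1), (volume (X i ∩ X (wsucc n i))).toReal
          + (∑ i ∈ T, ((volume (X i ∩ X n)).toReal + (volume (X (wsucc n i) ∩ X n)).toReal)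
            + ∑ i ∈ Finset.Icc 1 (n-1) \ U, (volume (X i ∩ X n)).toReal) := by
      simp only [hF]
      rw [Finset.sum_add_distrib, Finset.sum_add_distrib]
      rw [sum_ite_T hT _ (fun _ => (0:ℝ)), sum_ite_T (hU_sub hn hT) (fun _ => (0:ℝ)) _]
      rw [Finset.sum_const_zero, Finset.sum_const_zero, add_zero, zero_add, add_assoc]
    rw [e1, ← sum_split_U hn hT hP1 (fun i => (volume (X i ∩ X n)).toReal)]
    rw [← Finset.sum_add_distrib]
    exact hsum
  have hgF : ∑ i ∈ Finset.Icc 1 (n-1), g i = ∑ i ∈ Finset.Icc 1 (n-1), F i := by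
    rw [hFsum, ← phiW_regroup hn x hT]
  have htight : ∀ i ∈ Finset.Icc 1 (n-1), g i = F i :=
    (Finset.sum_eq_sum_iff_of_le hFg).mp hgF
  unfold zSystem
  refine ⟨?_, ?_, ?_, ?_, ?_⟩
  · -- clause 1
    intro i hiU
    have hi : i ∈ Finset.Icc 1 (n-1) := hU_sub hn hT hiU
    have h1 := hz_an i hi
    have h2 := han_le i hi
    unfold mW
    exact max_le ENNReal.toReal_nonneg (by linarith)
  · -- clause 2
    intro i hi2
    obtain ⟨hi, hiU⟩ := Finset.mem_sdiff.mp hi2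
    have hiT : i ∉ T := fun h => hiU (Finset.mem_union_left _ h)
    have ht := htight i hi
    simp only [hg, hF, if_neg hiT, if_neg (show i ∉ U from hiU)] at ht
    have h1 := hpair i hi
    have h2 := hpn i hi
    have han_eq : (volume (X i ∩ X n)).toReal = max 0 (x i + x n - 1) := by linarith
    have hz := hz_an i hi
    unfold MW
    have t1 : min (x i) (1 - x n) ≤ x i := min_le_left _ _
    have t2 : min (x i) (1 - x n) ≤ 1 - x n := min_le_right _ _
    rcases le_total (x i + x n) 1 with h | h
    · rw [max_eq_left (by linarith)] at han_eq; linarith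
    · rw [max_eq_right (by linarith)] at han_eq; linarith
  · -- clause 3
    intro i hi
    unfold MW
    refine le_min ?_ ?_
    · have h1 := hz_an i hi
      have h2 : 0 ≤ (volume (X i ∩ X n)).toReal := ENNReal.toReal_nonneg
      linarith
    · have h1 := nu_diff_le (hXsub i hi) hXn hXnm
      rw [hxn] at h1
      exact h1
  · -- clause 4
    intro i hiT
    have hi : i ∈ Finset.Icc 1 (n-1) := hT hiT
    have hj := wsucc_mem hn hi
    have hiU : i ∈ U := Finset.mem_union_left _ hiT
    have ht := htight i hi
    simp only [hg, hF, if_pos hiT, if_pos hiU] at ht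
    have htr : 1 ≤ x i + x (wsucc n i) + x n := (hP3 i hiT).1
    rw [max_eq_right (by linarith)] at ht
    have h1 := hpair i hi
    have hz1 := hz_an i hi
    have hz2 := hz_an _ hj
    unfold M'W
    have hm := max_one_eq (x i + x (wsucc n i))
    linarith
  · -- clause 5
    intro i hi5
    obtain ⟨hi, hiT⟩ := Finset.mem_sdiff.mp hi5
    have hj := wsucc_mem hn hi
    have ht := htight i hi
    have hab_eq : (volume (X i ∩ X (wsucc n i))).toReal
        = max 0 (x i + x (wsucc n i) - 1) := by
      by_cases hiU : i ∈ U
      · simp only [hg, hF, if_neg hiT, if_pos hiU] at ht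
        linarith
      · simp only [hg, hF, if_neg hiT, if_neg hiU] at ht
        have h1 := hpair i hi
        have h2 := hpn i hi
        linarith
    have hsplit := nu_diff_split (hXsub i hi) (hXsub _ hj) (hXme _ hj) hXnm
    have hz1 := hz_an i hi
    have hz2 := hz_an _ hj
    have hui := nu_union_add_inter (hXsub i hi) (hXsub _ hj) (hXme _ hj)
    rw [hXv i (hmemn i hi), hXv _ (hmemn _ hj)] at hui
    have hle1 : (volume ((X i ∪ X (wsucc n i)) \ X n)).toReal ≤ 1 - x n := by
      have h := nu_diff_le (Set.union_subset (hXsub i hi) (hXsub _ hj)) hXn hXnm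
      rwa [hxn] at h
    have hle2 : (volume ((X i ∩ X (wsucc n i)) \ X n)).toReal
        ≤ (volume (X i ∩ X (wsucc n i))).toReal :=
      nu_mono (fun y (hy : y ∈ X i ∩ X (wsucc n i)) => hXsub i hi hy.1) Set.diff_subset
    have hge : (volume ((X i ∪ X (wsucc n i)) ∩ X n)).toReal ≤ x n := by
      rw [← hxn]; exact nu_mono hXn Set.inter_subset_right
    have hid := nu_inter_add_diff (Set.union_subset (hXsub i hi) (hXsub _ hj)) hXnm
    constructor
    · unfold m'W
      have hm := min_one_eq (x i + x (wsucc n i))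
      have h0 : 0 ≤ (volume ((X i ∩ X (wsucc n i)) \ X n)).toReal := ENNReal.toReal_nonneg
      linarith
    · unfold M'W
      have hm := max_one_eq (x i + x (wsucc n i))
      linarith

end Forward

section BwdHelp
open MeasureTheory

lemma vol_two_Ico {p q r s : ℝ} (h : q ≤ r) :
    (volume (Set.Ico p q ∪ Set.Ico r s)).toReal = max 0 (q - p) + max 0 (s - r) := by
  have hdis : Disjoint (Set.Ico p q) (Set.Ico r s) :=
    Set.Ico_disjoint_Ico.mpr (le_trans (min_le_left _ _) (le_trans h (le_max_right _ _)))
  rw [measure_union hdis measurableSet_Ico, Real.volume_Ico, Real.volume_Ico,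
    ENNReal.toReal_add ENNReal.ofReal_ne_top ENNReal.ofReal_ne_top,
    ENNReal.toReal_ofReal', ENNReal.toReal_ofReal', max_comm (q-p) 0, max_comm (s-r) 0]

lemma key_inter {xn ao zo ae ze : ℝ} (hxn1 : xn ≤ 1)
    (hao0 : 0 ≤ ao) (hao : ao ≤ xn) (hae0 : 0 ≤ ae) (hae : ae ≤ xn)
    (hzo0 : 0 ≤ zo) (hzo : zo ≤ 1 - xn) (hze0 : 0 ≤ ze) (hze : ze ≤ 1 - xn) :
    (volume ((Set.Ico 0 ao ∪ Set.Ico xn (xn + zo))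
        ∩ (Set.Ico (xn - ae) xn ∪ Set.Ico (1 - ze) 1))).toReal
      = max 0 (ao + ae - xn) + max 0 (zo + ze - (1 - xn)) := by
  have e : (Set.Ico 0 ao ∪ Set.Ico xn (xn + zo))
        ∩ (Set.Ico (xn - ae) xn ∪ Set.Ico (1 - ze) 1)
      = Set.Ico (xn - ae) ao ∪ Set.Ico (1 - ze) (xn + zo) := by
    ext y
    simp only [Set.mem_inter_iff, Set.mem_union, Set.mem_Ico]
    constructor
    · rintro ⟨h1 | h1, h2 | h2⟩
      · exact Or.inl ⟨h2.1, h1.2⟩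
      · exact absurd h2.1 (by linarith [h1.2])
      · exact absurd h2.2 (by linarith [h1.1])
      · exact Or.inr ⟨h2.1, h1.2⟩
    · rintro (⟨h1, h2⟩ | ⟨h1, h2⟩)
      · exact ⟨Or.inl ⟨by linarith, h2⟩, Or.inl ⟨h1, by linarith⟩⟩
      · exact ⟨Or.inr ⟨by linarith, h2⟩, Or.inr ⟨h1, by linarith⟩⟩
  rw [e, vol_two_Ico (by linarith)]
  have e1 : ao - (xn - ae) = ao + ae - xn := by ring
  have e2 : xn + zo - (1 - ze) = zo + ze - (1 - xn) := by ring
  rw [e1, e2]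

lemma wsucc_mod2 {n : ℕ} (hn : 5 ≤ n) (heven : Even (n-1)) {i : ℕ}
    (hi : i ∈ Finset.Icc 1 (n-1)) : (wsucc n i) % 2 = 1 - i % 2 := by
  have h2 : (n-1) % 2 = 0 := Nat.even_iff.mp heven
  simp only [Finset.mem_Icc] at hi
  unfold wsucc
  split_ifs with h <;> omega

end BwdHelp
section Backward
open MeasureTheory

lemma backward_X {n : ℕ} (hn : 5 ≤ n) (heven : Even (n - 1)) {x : ℕ → ℝ}
    (hx : ∀ i ∈ Finset.Icc 1 n, 0 ≤ x i ∧ x i ≤ 1)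
    {T : Finset ℕ} (hT : T ⊆ Finset.Icc 1 (n - 1))
    (hP1 : T ∩ T.image (wsucc n) = ∅)
    (hP3 : ∀ i ∈ T, 1 ≤ x i + x (wsucc n i) + x n ∧ x i + x (wsucc n i) + x n ≤ 2)
    {z : ℕ → ℝ} (hz : zSystem n x T z) :
    ∃ X : ℕ → Set ℝ,
        (∀ i ∈ Finset.Icc 1 n, MeasurableSet (X i)) ∧
        (∀ i ∈ Finset.Icc 1 n, X i ⊆ Set.Ico 0 1) ∧
        (∀ i ∈ Finset.Icc 1 n, (volume (X i)).toReal = x i) ∧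
        ∑ i ∈ Finset.Icc 1 (n - 1),
            ((volume (X i ∩ X (wsucc n i))).toReal + (volume (X i ∩ X n)).toReal)
          = phiW n x T := by
  classical
  obtain ⟨hz1, hz2, hz3, hz4, hz5⟩ := hz
  have hnn : n ∈ Finset.Icc 1 n := by simp only [Finset.mem_Icc]; omega
  have hxn0 : 0 ≤ x n := (hx n hnn).1
  have hxn1 : x n ≤ 1 := (hx n hnn).2
  have hmemn : ∀ i ∈ Finset.Icc 1 (n-1), i ∈ Finset.Icc 1 n := by
    intro i hi; simp only [Finset.mem_Icc] at *; omega
  have hne : ∀ i ∈ Finset.Icc 1 (n-1), i ≠ n := by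
    intro i hi; simp only [Finset.mem_Icc] at hi; omega
  set U := T ∪ T.image (wsucc n) with hUdef
  -- basic bounds on z and a
  have hzlow : ∀ i ∈ Finset.Icc 1 (n-1), max 0 (x i - x n) ≤ z i := by
    intro i hi
    by_cases hiU : i ∈ U
    · exact hz1 i hiU
    · refine le_trans ?_ (hz2 i (Finset.mem_sdiff.mpr ⟨hi, hiU⟩))
      unfold MW
      have h0 := (hx i (hmemn i hi)).1
      have h1 := (hx i (hmemn i hi)).2
      exact max_le (le_min h0 (by linarith)) (le_min (by linarith) (by linarith))
  have hzup : ∀ i ∈ Finset.Icc 1 (n-1), z i ≤ min (x i) (1 - x n) := fun i hi => hz3 i hi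
  have hz0 : ∀ i ∈ Finset.Icc 1 (n-1), 0 ≤ z i :=
    fun i hi => le_trans (le_max_left _ _) (hzlow i hi)
  have hzxn : ∀ i ∈ Finset.Icc 1 (n-1), x i - x n ≤ z i :=
    fun i hi => le_trans (le_max_right _ _) (hzlow i hi)
  have hzx : ∀ i ∈ Finset.Icc 1 (n-1), z i ≤ x i :=
    fun i hi => le_trans (hzup i hi) (min_le_left _ _)
  have hz1x : ∀ i ∈ Finset.Icc 1 (n-1), z i ≤ 1 - x n :=
    fun i hi => le_trans (hzup i hi) (min_le_right _ _)
  -- the sets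
  set X : ℕ → Set ℝ := fun i =>
    if i = n then Set.Ico 0 (x n)
    else if i % 2 = 1 then Set.Ico 0 (x i - z i) ∪ Set.Ico (x n) (x n + z i)
    else Set.Ico (x n - (x i - z i)) (x n) ∪ Set.Ico (1 - z i) 1 with hXdef
  have hXn : X n = Set.Ico 0 (x n) := by simp only [hXdef, if_pos rfl]
  have hXodd : ∀ i ∈ Finset.Icc 1 (n-1), i % 2 = 1 →
      X i = Set.Ico 0 (x i - z i) ∪ Set.Ico (x n) (x n + z i) := by
    intro i hi h
    simp only [hXdef, if_neg (hne i hi), if_pos h]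
  have hXeven : ∀ i ∈ Finset.Icc 1 (n-1), i % 2 = 0 →
      X i = Set.Ico (x n - (x i - z i)) (x n) ∪ Set.Ico (1 - z i) 1 := by
    intro i hi h
    simp only [hXdef, if_neg (hne i hi), if_neg (by omega : ¬ i % 2 = 1)]
  refine ⟨X, ?_, ?_, ?_, ?_⟩
  · -- measurability
    intro i _
    simp only [hXdef]
    split_ifs <;>
      first
        | exact measurableSet_Ico
        | exact (measurableSet_Ico).union measurableSet_Ico
  · -- subset of [0,1)
    intro i hi
    by_cases hin : i = n
    · subst hin
      rw [hXn]
      exact Set.Ico_subset_Ico_right hxn1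
    · have hi' : i ∈ Finset.Icc 1 (n-1) := by
        simp only [Finset.mem_Icc] at hi ⊢; omega
      have h0 := hz0 i hi'
      have h1 := hz1x i hi'
      have h2 := hzx i hi'
      have h3 := hzxn i hi'
      rcases Nat.mod_two_eq_zero_or_one i with hp | hp
      · rw [hXeven i hi' hp]
        rintro y (⟨u1, u2⟩ | ⟨u1, u2⟩) <;> exact Set.mem_Ico.mpr ⟨by linarith, by linarith⟩
      · rw [hXodd i hi' hp]
        rintro y (⟨u1, u2⟩ | ⟨u1, u2⟩) <;> exact Set.mem_Ico.mpr ⟨by linarith, by linarith⟩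
  · -- volumes
    intro i hi
    by_cases hin : i = n
    · subst hin
      rw [hXn, nu_Ico, max_eq_right (by linarith)]
      ring
    · have hi' : i ∈ Finset.Icc 1 (n-1) := by
        simp only [Finset.mem_Icc] at hi ⊢; omega
      have h0 := hz0 i hi'
      have h1 := hz1x i hi'
      have h2 := hzx i hi'
      have h3 := hzxn i hi'
      rcases Nat.mod_two_eq_zero_or_one i with hp | hp
      · rw [hXeven i hi' hp, vol_two_Ico (by linarith),
          max_eq_right (by linarith), max_eq_right (by linarith)]
        ring
      · rw [hXodd i hi' hp, vol_two_Ico (by linarith),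
          max_eq_right (by linarith), max_eq_right (by linarith)]
        ring
  · -- the sum
    have hanX : ∀ i ∈ Finset.Icc 1 (n-1), (volume (X i ∩ X n)).toReal = x i - z i := by
      intro i hi
      have h0 := hz0 i hi
      have h1 := hz1x i hi
      have h2 := hzx i hi
      have h3 := hzxn i hi
      rcases Nat.mod_two_eq_zero_or_one i with hp | hp
      · rw [hXeven i hi hp, hXn]
        have e : (Set.Ico (x n - (x i - z i)) (x n) ∪ Set.Ico (1 - z i) 1)
            ∩ Set.Ico 0 (x n) = Set.Ico (x n - (x i - z i)) (x n) := by
          ext y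
          simp only [Set.mem_inter_iff, Set.mem_union, Set.mem_Ico]
          constructor
          · rintro ⟨u1 | u1, u2⟩
            · exact u1
            · exact absurd u2.2 (by linarith [u1.1])
          · intro u
            exact ⟨Or.inl u, ⟨by linarith [u.1], u.2⟩⟩
        rw [e, nu_Ico, max_eq_right (by linarith)]
        ring
      · rw [hXodd i hi hp, hXn]
        have e : (Set.Ico 0 (x i - z i) ∪ Set.Ico (x n) (x n + z i))
            ∩ Set.Ico 0 (x n) = Set.Ico 0 (x i - z i) := by
          ext y
          simp only [Set.mem_inter_iff, Set.mem_union, Set.mem_Ico]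
          constructor
          · rintro ⟨u1 | u1, u2⟩
            · exact u1
            · exact absurd u2.2 (by linarith [u1.1])
          · intro u
            exact ⟨Or.inl u, ⟨u.1, by linarith [u.2]⟩⟩
        rw [e, nu_Ico, max_eq_right (by linarith)]
        ring
    have hedge : ∀ i ∈ Finset.Icc 1 (n-1),
        (volume (X i ∩ X (wsucc n i))).toReal
          = max 0 ((x i - z i) + (x (wsucc n i) - z (wsucc n i)) - x n)
            + max 0 (z i + z (wsucc n i) - (1 - x n)) := by
      intro i hi
      have hj : wsucc n i ∈ Finset.Icc 1 (n-1) := wsucc_mem hn hi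
      have hmod := wsucc_mod2 hn heven hi
      have h0 := hz0 i hi
      have h1 := hz1x i hi
      have h2 := hzx i hi
      have h3 := hzxn i hi
      have h0' := hz0 _ hj
      have h1' := hz1x _ hj
      have h2' := hzx _ hj
      have h3' := hzxn _ hj
      rcases Nat.mod_two_eq_zero_or_one i with hp | hp
      · have hq : (wsucc n i) % 2 = 1 := by omega
        rw [hXeven i hi hp, hXodd _ hj hq, Set.inter_comm]
        rw [key_inter hxn1 (by linarith) (by linarith) (by linarith) (by linarith)
          h0' h1' h0 h1]
        have e1 : x (wsucc n i) - z (wsucc n i) + (x i - z i) - x n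
            = (x i - z i) + (x (wsucc n i) - z (wsucc n i)) - x n := by ring
        have e2 : z (wsucc n i) + z i - (1 - x n) = z i + z (wsucc n i) - (1 - x n) := by
          ring
        rw [e1, e2]
      · have hq : (wsucc n i) % 2 = 0 := by omega
        rw [hXodd i hi hp, hXeven _ hj hq]
        exact key_inter hxn1 (by linarith) (by linarith) (by linarith) (by linarith)
          h0 h1 h0' h1'
    -- evaluate each edge
    have hedgeval : ∀ i ∈ Finset.Icc 1 (n-1),
        (volume (X i ∩ X (wsucc n i))).toReal
          = if i ∈ T then z i + z (wsucc n i) - (1 - x n)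
            else max 0 (x i + x (wsucc n i) - 1) := by
      intro i hi
      rw [hedge i hi]
      by_cases hiT : i ∈ T
      · rw [if_pos hiT]
        have h4 := hz4 i hiT
        unfold M'W at h4
        have hb1 := le_max_left (1:ℝ) (x i + x (wsucc n i))
        have hb2 := le_max_right (1:ℝ) (x i + x (wsucc n i))
        rw [max_eq_left (by linarith), max_eq_right (by linarith)]
        ring
      · rw [if_neg hiT]
        have h5 := hz5 i (Finset.mem_sdiff.mpr ⟨hi, hiT⟩)
        unfold m'W M'W at h5
        obtain ⟨h5a, h5b⟩ := h5
        rcases le_total (x i + x (wsucc n i)) 1 with hc | hc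
        · rw [min_eq_right hc] at h5a
          rw [max_eq_left hc] at h5b
          rw [max_eq_left (by linarith), max_eq_left (by linarith),
            max_eq_left (by linarith)]
          ring
        · rw [min_eq_left hc] at h5a
          rw [max_eq_right hc] at h5b
          rw [max_eq_right (by linarith), max_eq_right (by linarith),
            max_eq_right (by linarith)]
          ring
    -- a on the complement of U
    have hanF : ∀ i ∈ Finset.Icc 1 (n-1) \ U, x i - z i = max 0 (x i + x n - 1) := by
      intro i hi2
      obtain ⟨hi, hiU⟩ := Finset.mem_sdiff.mp hi2
      have hzeq : z i = min (x i) (1 - x n) :=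
        le_antisymm (hz3 i hi) (hz2 i (Finset.mem_sdiff.mpr ⟨hi, hiU⟩))
      rcases le_total (x i + x n) 1 with hc | hc
      · rw [min_eq_left (by linarith)] at hzeq
        rw [hzeq, max_eq_left (by linarith)]
        ring
      · rw [min_eq_right (by linarith)] at hzeq
        rw [hzeq, max_eq_right (by linarith)]
        ring
    -- assemble
    have hstep : ∑ i ∈ Finset.Icc 1 (n-1),
        ((volume (X i ∩ X (wsucc n i))).toReal + (volume (X i ∩ X n)).toReal)
        = ∑ i ∈ Finset.Icc 1 (n-1),
          ((if i ∈ T then z i + z (wsucc n i) - (1 - x n)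
              else max 0 (x i + x (wsucc n i) - 1)) + (x i - z i)) :=
      Finset.sum_congr rfl (fun i hi => by rw [hedgeval i hi, hanX i hi])
    rw [hstep, Finset.sum_add_distrib, sum_ite_T hT, sum_split_U hn hT hP1
      (fun i => x i - z i)]
    have h2 : ∑ i ∈ Finset.Icc 1 (n-1) \ U, (x i - z i)
        = ∑ i ∈ Finset.Icc 1 (n-1) \ U, max 0 (x i + x n - 1) :=
      Finset.sum_congr rfl (fun i hi => hanF i hi)
    have h3 : ∑ i ∈ T, (z i + z (wsucc n i) - (1 - x n))
          + ∑ i ∈ T, ((x i - z i) + (x (wsucc n i) - z (wsucc n i)))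
        = ∑ i ∈ T, max 0 (x i + x (wsucc n i) + x n - 1) := by
      rw [← Finset.sum_add_distrib]
      refine Finset.sum_congr rfl (fun i hi => ?_)
      have := (hP3 i hi).1
      rw [max_eq_right (by linarith)]
      ring
    rw [h2]
    unfold phiW
    linarith [h3]

end Backward

open MeasureTheory

theorem sets_iff_zSystem (n : ℕ) (hn : 5 ≤ n) (heven : Even (n - 1)) (x : ℕ → ℝ)
    (hx : ∀ i ∈ Finset.Icc 1 n, 0 ≤ x i ∧ x i ≤ 1)
    (T : Finset ℕ) (hT : T ⊆ Finset.Icc 1 (n - 1))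
    (hP1 : T ∩ T.image (wsucc n) = ∅)
    (hP2 : phiW n x T = phiStarW n x)
    (hP3 : ∀ i ∈ T, 1 ≤ x i + x (wsucc n i) + x n ∧ x i + x (wsucc n i) + x n ≤ 2)
    (hP4 : ∀ i ∈ Finset.Icc 1 (n - 1),
      1 ≤ x i + x (wsucc n i) + x n → x i + x (wsucc n i) + x n ≤ 2 →
        (wpred n i ∈ T ∨ i ∈ T ∨ wsucc n i ∈ T)) :
    (∃ X : ℕ → Set ℝ,
        (∀ i ∈ Finset.Icc 1 n, MeasurableSet (X i)) ∧
        (∀ i ∈ Finset.Icc 1 n, X i ⊆ Set.Ico 0 1) ∧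
        (∀ i ∈ Finset.Icc 1 n, (volume (X i)).toReal = x i) ∧
        ∑ i ∈ Finset.Icc 1 (n - 1),
            ((volume (X i ∩ X (wsucc n i))).toReal + (volume (X i ∩ X n)).toReal)
          = phiW n x T)
    ↔ (∃ z : ℕ → ℝ, zSystem n x T z) := by
  constructor
  · rintro ⟨X, hXm, hXs, hXv, hsum⟩
    exact ⟨_, forward_z hn hx hT hP1 hP3 hXm hXs hXv hsum⟩
  · rintro ⟨z, hz⟩
    exact backward_X hn heven hx hT hP1 hP3 hz
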